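/- For each A ∈ SL(2,ℂ), the transformation X ↦ A X A* on Hermitian 2×2 matrices corresponds to a Lorentz transformation of ℝ^{1,3} (preserves the Minkowski form); moreover A₁, A₂ ∈ SL(2,ℂ) induce the same transformation if and only if A₁ = ±A₂, giving a two-to-one homomorphism SL(2,ℂ) → O(1,3). -/

import Mathlib

open scoped Matrix

noncomputable def toMat (x : Fin 4 → ℝ) : Matrix (Fin 2) (Fin 2) ℂ :=
  !![((x 0 + x 3 : ℝ) : ℂ), ((x 1 : ℝ) : ℂ) - ((x 2 : ℝ) : ℂ) * Complex.I;
     ((x 1 : ℝ) : ℂ) + ((x 2 : ℝ) : ℂ) * Complex.I, ((x 0 - x 3 : ℝ) : ℂ)]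

lemma det_toMat (x : Fin 4 → ℝ) :
    (toMat x).det = ((x 0 ^ 2 - x 1 ^ 2 - x 2 ^ 2 - x 3 ^ 2 : ℝ) : ℂ) := by
  simp only [toMat, Matrix.det_fin_two_of]
  push_cast
  ring_nf
  simp [Complex.I_sq]
  ring

lemma toMat_herm (x : Fin 4 → ℝ) : (toMat x).IsHermitian := by
  ext i j
  fin_cases i <;> fin_cases j <;>
    simp [toMat, Matrix.conjTranspose_apply, Complex.ext_iff]

lemma herm_eq_toMat {Y : Matrix (Fin 2) (Fin 2) ℂ} (hY : Y.IsHermitian) :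
    ∃ y : Fin 4 → ℝ, toMat y = Y := by
  refine ⟨![((Y 0 0).re + (Y 1 1).re) / 2, (Y 1 0).re, (Y 1 0).im,
    ((Y 0 0).re - (Y 1 1).re) / 2], ?_⟩
  have h00 : (Y 0 0).im = 0 := by
    rw [← Complex.conj_eq_iff_im]
    have := congrArg (fun M => M 0 0) hY
    simpa [Matrix.conjTranspose_apply] using this
  have h11 : (Y 1 1).im = 0 := by
    rw [← Complex.conj_eq_iff_im]
    have := congrArg (fun M => M 1 1) hY
    simpa [Matrix.conjTranspose_apply] using this
  have h01 : Y 0 1 = starRingEnd ℂ (Y 1 0) := by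
    have := congrArg (fun M => M 0 1) hY.symm
    simpa [Matrix.conjTranspose_apply] using this
  ext i j
  fin_cases i <;> fin_cases j <;>
    simp [toMat, h01, Complex.ext_iff, h00, h11] <;> ring

theorem sl2c_lorentz_two_to_one :
    (∀ A : Matrix.SpecialLinearGroup (Fin 2) ℂ, ∀ x : Fin 4 → ℝ,
      ∃ y : Fin 4 → ℝ,
        (A : Matrix (Fin 2) (Fin 2) ℂ) * toMat x * (A : Matrix (Fin 2) (Fin 2) ℂ)ᴴ =
          toMat y ∧
        y 0 ^ 2 - y 1 ^ 2 - y 2 ^ 2 - y 3 ^ 2 = x 0 ^ 2 - x 1 ^ 2 - x 2 ^ 2 - x 3 ^ 2) ∧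
    (∀ A₁ A₂ : Matrix.SpecialLinearGroup (Fin 2) ℂ,
      (∀ X : Matrix (Fin 2) (Fin 2) ℂ, X.IsHermitian →
          (A₁ : Matrix (Fin 2) (Fin 2) ℂ) * X * (A₁ : Matrix (Fin 2) (Fin 2) ℂ)ᴴ =
          (A₂ : Matrix (Fin 2) (Fin 2) ℂ) * X * (A₂ : Matrix (Fin 2) (Fin 2) ℂ)ᴴ) ↔
        ((A₁ : Matrix (Fin 2) (Fin 2) ℂ) = (A₂ : Matrix (Fin 2) (Fin 2) ℂ) ∨
         (A₁ : Matrix (Fin 2) (Fin 2) ℂ) = -(A₂ : Matrix (Fin 2) (Fin 2) ℂ))) := by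
  constructor
  · intro A x
    set Am := (A : Matrix (Fin 2) (Fin 2) ℂ)
    have hdet : Am.det = 1 := A.2
    have hY : (Am * toMat x * Amᴴ).IsHermitian := by
      unfold Matrix.IsHermitian
      rw [Matrix.conjTranspose_mul, Matrix.conjTranspose_mul,
        Matrix.conjTranspose_conjTranspose, (toMat_herm x).eq, Matrix.mul_assoc]
    obtain ⟨y, hy⟩ := herm_eq_toMat hY
    refine ⟨y, hy.symm ▸ rfl, ?_⟩
    have hd : (toMat y).det = (toMat x).det := by
      rw [hy, Matrix.det_mul, Matrix.det_mul, Matrix.det_conjTranspose, hdet]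
      simp
    rw [det_toMat, det_toMat] at hd
    exact_mod_cast hd
  · intro A₁ A₂
    constructor
    · intro h
      set B₁ := (A₁ : Matrix (Fin 2) (Fin 2) ℂ)
      set B₂ := (A₂ : Matrix (Fin 2) (Fin 2) ℂ)
      have hd₁ : B₁.det = 1 := A₁.2
      have hd₂ : B₂.det = 1 := A₂.2
      have hu₂ : IsUnit B₂.det := by rw [hd₂]; exact isUnit_one
      -- extend to all matrices
      have hall : ∀ X : Matrix (Fin 2) (Fin 2) ℂ, B₁ * X * B₁ᴴ = B₂ * X * B₂ᴴ := by
        intro X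
        have hH1 : (X + Xᴴ).IsHermitian := by
          unfold Matrix.IsHermitian
          rw [Matrix.conjTranspose_add, Matrix.conjTranspose_conjTranspose, add_comm]
        have hH2 : (Complex.I • (Xᴴ - X)).IsHermitian := by
          unfold Matrix.IsHermitian
          rw [Matrix.conjTranspose_smul, Matrix.conjTranspose_sub,
            Matrix.conjTranspose_conjTranspose]
          simp only [Complex.star_def, Complex.conj_I, neg_smul, smul_sub]
          abel
        have e1 := h _ hH1
        have e2 := h _ hH2
        have f1 : B₁ * X * B₁ᴴ + B₁ * Xᴴ * B₁ᴴ = B₂ * X * B₂ᴴ + B₂ * Xᴴ * B₂ᴴ := by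
          simpa [Matrix.mul_add, Matrix.add_mul] using e1
        have f2' : Complex.I • (B₁ * (Xᴴ - X) * B₁ᴴ) = Complex.I • (B₂ * (Xᴴ - X) * B₂ᴴ) := by
          simpa [Matrix.mul_smul, Matrix.smul_mul] using e2
        have f2 : B₁ * Xᴴ * B₁ᴴ - B₁ * X * B₁ᴴ = B₂ * Xᴴ * B₂ᴴ - B₂ * X * B₂ᴴ := by
          have := smul_right_injective (Matrix (Fin 2) (Fin 2) ℂ) Complex.I_ne_zero f2'
          simpa [Matrix.mul_sub, Matrix.sub_mul] using this
        have g : (2:ℂ) • (B₁ * X * B₁ᴴ) = (2:ℂ) • (B₂ * X * B₂ᴴ) := by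
          have := congrArg₂ (· - ·) f1 f2
          rw [two_smul, two_smul]
          abel_nf at this ⊢
          convert this using 2 <;> abel
        exact smul_right_injective (Matrix (Fin 2) (Fin 2) ℂ) two_ne_zero g
      set C := B₂⁻¹ * B₁ with hCdef
      have hC : ∀ X : Matrix (Fin 2) (Fin 2) ℂ, C * X * Cᴴ = X := by
        intro X
        have : Cᴴ = B₁ᴴ * (B₂ᴴ)⁻¹ := by
          rw [hCdef, Matrix.conjTranspose_mul, Matrix.conjTranspose_nonsing_inv]
        rw [this, hCdef]
        have hu₂' : IsUnit B₂ᴴ.det := by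
          rw [Matrix.det_conjTranspose, hd₂]; simp
        calc B₂⁻¹ * B₁ * X * (B₁ᴴ * (B₂ᴴ)⁻¹)
            = B₂⁻¹ * (B₁ * X * B₁ᴴ) * (B₂ᴴ)⁻¹ := by
              simp only [Matrix.mul_assoc]
          _ = B₂⁻¹ * (B₂ * X * B₂ᴴ) * (B₂ᴴ)⁻¹ := by rw [hall X]
          _ = (B₂⁻¹ * B₂) * X * (B₂ᴴ * (B₂ᴴ)⁻¹) := by simp only [Matrix.mul_assoc]
          _ = X := by
              rw [Matrix.nonsing_inv_mul _ hu₂, Matrix.mul_nonsing_inv _ hu₂']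
              simp
      have hCC : C * Cᴴ = 1 := by simpa using hC 1
      have hCC' : Cᴴ * C = 1 := mul_eq_one_comm.mp hCC
      have hcomm : ∀ X : Matrix (Fin 2) (Fin 2) ℂ, C * X = X * C := by
        intro X
        calc C * X = C * X * (Cᴴ * C) := by rw [hCC', Matrix.mul_one]
          _ = (C * X * Cᴴ) * C := by simp only [Matrix.mul_assoc]
          _ = X * C := by rw [hC X]
      obtain ⟨c, hc⟩ := Matrix.mem_range_scalar_of_commute_single
        (M := C) (fun i j _ => (hcomm _).symm)
      have hdetC : C.det = 1 := by
        rw [hCdef, Matrix.det_mul, Matrix.det_nonsing_inv, hd₁, hd₂]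
        simp
      have hc2 : c ^ 2 = 1 := by
        have : (Matrix.scalar (Fin 2) c).det = c ^ 2 := by
          simp [Matrix.scalar_apply, Matrix.det_diagonal]
        rw [hc, hdetC] at this
        exact this.symm
      have hB₁ : B₁ = B₂ * C := by
        rw [hCdef, ← Matrix.mul_assoc, Matrix.mul_nonsing_inv _ hu₂, Matrix.one_mul]
      have hcases : c = 1 ∨ c = -1 := by
        have hz : (c - 1) * (c + 1) = 0 := by linear_combination hc2
        rcases mul_eq_zero.mp hz with h' | h'
        · exact Or.inl (sub_eq_zero.mp h')
        · exact Or.inr (eq_neg_of_add_eq_zero_left h')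
      rcases hcases with rfl | rfl
      · left
        rw [hB₁, ← hc]
        simp [Matrix.scalar_apply]
      · right
        rw [hB₁, ← hc]
        have : Matrix.scalar (Fin 2) (-1 : ℂ) = -(1 : Matrix (Fin 2) (Fin 2) ℂ) := by
          simp only [Matrix.scalar_apply]
          rw [← Matrix.diagonal_one, ← Matrix.diagonal_neg]
        rw [this]
        simp
    · rintro (h | h) X _
      · rw [h]
      · rw [h]; simp [Matrix.conjTranspose_neg]
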